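/- Let W be a standard one-dimensional Brownian motion on a probability space (Ω, ℱ, P), let c ≠ 0 be a real constant, and let v < 0. Define the random time t*(ω) = inf{ t ≥ 0 : −(v/2) ∫₀ᵗ exp(−c W_s(ω)) ds ≥ 1 } (with t* = ∞ if the set is empty). Then for every t ≥ 0, P( t* ≥ t ) = P( ∫₀^{c² t / 4} exp(2 W_s) ds ≤ −c² / (2 v) ). -/

import Mathlib

open MeasureTheory ProbabilityTheory Real Set Filter
open scoped ENNReal NNReal Topology BoundedContinuousFunction

/-- A standard one-dimensional Brownian motion on a probability space: starts at `0`,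
has continuous sample paths, Gaussian increments `W_t − W_s ~ N(0, t−s)` for
`0 ≤ s ≤ t`, and independent increments over any finite increasing sequence of
nonnegative times. -/
structure IsStandardBrownianMotion {Ω : Type*} [MeasurableSpace Ω]
    (P : Measure Ω) (W : ℝ → Ω → ℝ) : Prop where
  isProbability : IsProbabilityMeasure P
  measurable : ∀ t : ℝ, Measurable (W t)
  init : ∀ ω, W 0 ω = 0
  cont : ∀ ω, Continuous fun t => W t ω
  gauss_incr : ∀ s t : ℝ, 0 ≤ s → s ≤ t →
    Measure.map (fun ω => W t ω - W s ω) P = gaussianReal 0 (Real.toNNReal (t - s))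
  indep_incr : ∀ (n : ℕ) (t : Fin (n + 1) → ℝ), (∀ i, 0 ≤ t i) → Monotone t →
    iIndepFun
      (fun (i : Fin n) ω => W (t i.succ) ω - W (t i.castSucc) ω) P

lemma map_pi_of_iIndepFun {Ω : Type*} [MeasurableSpace Ω] {P : Measure Ω}
    [IsProbabilityMeasure P] {n : ℕ} {X : Fin n → Ω → ℝ}
    (hmeas : ∀ i, Measurable (X i))
    (hindep : iIndepFun X P) :
    P.map (fun ω i => X i ω) = Measure.pi (fun i => P.map (X i)) := by
  haveI : ∀ i, IsProbabilityMeasure (P.map (X i)) :=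
    fun i => Measure.isProbabilityMeasure_map (hmeas i).aemeasurable
  refine (Measure.pi_eq (μ := fun i => P.map (X i)) fun s hs => ?_).symm
  rw [Measure.map_apply (measurable_pi_lambda _ hmeas) (MeasurableSet.univ_pi hs)]
  have h1 : (fun ω i => X i ω) ⁻¹' (Set.pi Set.univ s) = ⋂ i ∈ Finset.univ, X i ⁻¹' s i := by
    ext ω; simp [Set.mem_pi]
  rw [h1, hindep.measure_inter_preimage_eq_mul Finset.univ (fun i _ => hs i)]
  exact Finset.prod_congr rfl fun i _ => (Measure.map_apply (hmeas i) (hs i)).symm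

/-- Cumulative sums map. -/
noncomputable def cumsum (n : ℕ) : (Fin n → ℝ) → (Fin n → ℝ) :=
  fun x i => ∑ j : Fin n, if j ≤ i then x j else 0

lemma measurable_cumsum (n : ℕ) : Measurable (cumsum n) := by
  refine measurable_pi_lambda _ fun i => Finset.measurable_sum _ fun j _ => ?_
  by_cases h : j ≤ i <;> simp [h, measurable_pi_apply]

lemma bm_fdd {Ω : Type*} [MeasurableSpace Ω] {P : Measure Ω} {W : ℝ → Ω → ℝ}
    (hW : IsStandardBrownianMotion P W)
    {m : ℕ} (t : Fin (m+1) → ℝ) (ht0 : ∀ i, 0 ≤ t i) (htm : Monotone t) :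
    P.map (fun ω i => W (t i) ω)
      = (Measure.pi fun i : Fin (m+1) =>
          gaussianReal 0 (((Fin.cons 0 t : Fin (m+2) → ℝ) i.succ
            - (Fin.cons 0 t : Fin (m+2) → ℝ) i.castSucc).toNNReal)).map
          (cumsum (m+1)) := by
  haveI := hW.isProbability
  set u : Fin (m+2) → ℝ := Fin.cons 0 t with hu
  have hu0 : ∀ i, 0 ≤ u i := by
    intro i
    refine Fin.cases ?_ ?_ i
    · simp [hu]
    · intro j; simpa [hu] using ht0 j
  have hum : Monotone u := by
    rw [Fin.monotone_iff_le_succ]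
    intro i
    induction i using Fin.cases with
    | zero => simpa [hu] using ht0 0
    | succ j =>
      rw [← Fin.succ_castSucc]
      simpa [hu] using htm (Fin.castSucc_le_succ j)
  set D : Fin (m+1) → Ω → ℝ := fun i ω => W (u i.succ) ω - W (u i.castSucc) ω with hD
  have hDmeas : ∀ i, Measurable (D i) := fun i => (hW.measurable _).sub (hW.measurable _)
  have hDindep : iIndepFun D P :=
    hW.indep_incr (m+1) u hu0 hum
  have hDlaw : ∀ i, P.map (D i) = gaussianReal 0 ((u i.succ - u i.castSucc).toNNReal) :=
    fun i => hW.gauss_incr _ _ (hu0 _) (hum (Fin.castSucc_le_succ i))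
  -- telescoping
  have htel : (fun ω i => W (t i) ω) = (cumsum (m+1)) ∘ (fun ω i => D i ω) := by
    funext ω
    funext i
    simp only [Function.comp_apply, cumsum]
    induction i using Fin.induction with
    | zero =>
      simp only [Fin.le_zero_iff]
      rw [Finset.sum_ite_eq' Finset.univ (0 : Fin (m+1)) (fun x => D x ω)]
      simp [hD, hu, hW.init ω]
    | succ i ih =>
      have hsplit : ∀ x : Fin (m+1), (if x ≤ i.succ then D x ω else 0)
          = (if x ≤ i.castSucc then D x ω else 0) + (if x = i.succ then D x ω else 0) := by
        intro x
        by_cases h1 : x ≤ i.castSucc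
        · have h2 : x ≠ i.succ := by
            intro h; rw [h] at h1
            exact absurd h1 (not_le.mpr (Fin.castSucc_lt_succ : i.castSucc < i.succ))
          have h3 : x ≤ i.succ := h1.trans (Fin.castSucc_lt_succ : i.castSucc < i.succ).le
          simp [h1, h2, h3]
        · by_cases h2 : x = i.succ
          · simp [h1, h2]
          · have h3 : ¬ x ≤ i.succ := by
              intro h
              rcases lt_or_eq_of_le h with h' | h'
              · exact h1 (Fin.le_castSucc_iff.mpr h')
              · exact h2 h'
            simp [h1, h2, h3]
      rw [Finset.sum_congr rfl fun x _ => hsplit x, Finset.sum_add_distrib, ← ih,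
        Finset.sum_ite_eq' Finset.univ (i.succ) (fun x => D x ω)]
      have : D i.succ ω = W (t i.succ) ω - W (t i.castSucc) ω := by
        simp only [hD]
        rw [← Fin.succ_castSucc]
        simp [hu]
      simp [this]
  rw [htel, ← Measure.map_map (measurable_cumsum (m+1)) (measurable_pi_lambda _ hDmeas),
    map_pi_of_iIndepFun hDmeas hDindep]
  have : (fun i => P.map (D i))
      = fun i : Fin (m+1) => gaussianReal 0 ((u i.succ - u i.castSucc).toNNReal) :=
    funext hDlaw
  rw [this]

lemma scaled_bm {Ω : Type*} [MeasurableSpace Ω] {P : Measure Ω} {W : ℝ → Ω → ℝ}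
    (hW : IsStandardBrownianMotion P W) (c : ℝ) (hc : c ≠ 0) :
    IsStandardBrownianMotion P (fun u ω => -(c/2) * W (4/c^2*u) ω) := by
  have hc2 : (0:ℝ) < c^2 := by positivity
  have hc4 : (0:ℝ) < 4/c^2 := by positivity
  constructor
  · exact hW.isProbability
  · exact fun u => (hW.measurable _).const_mul _
  · intro ω; simp [hW.init ω]
  · intro ω
    exact continuous_const.mul ((hW.cont ω).comp (continuous_const.mul continuous_id))
  · intro s t hs hst
    have heq : (fun ω => -(c/2) * W (4/c^2*t) ω - -(c/2) * W (4/c^2*s) ω)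
        = (fun x => -(c/2) * x) ∘ (fun ω => W (4/c^2*t) ω - W (4/c^2*s) ω) := by
      funext ω; simp [Function.comp]; ring
    rw [heq, ← Measure.map_map (measurable_const_mul _) (show Measurable (fun ω => W (4/c^2*t) ω - W (4/c^2*s) ω) from (hW.measurable _).sub (hW.measurable _)),
      hW.gauss_incr _ _ (by positivity) (by nlinarith)]
    have : (fun x : ℝ => -(c/2) * x) = ((-(c/2)) * ·) := rfl
    rw [this, gaussianReal_map_const_mul]
    congr 1
    · ring
    · apply NNReal.coe_injective
      push_cast
      rw [Real.coe_toNNReal _ (by nlinarith), Real.coe_toNNReal _ (by linarith)]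
      field_simp
      ring
  · intro n τ hτ0 hτm
    have heq : (fun (i : Fin n) ω =>
          -(c/2) * W (4/c^2 * τ i.succ) ω - -(c/2) * W (4/c^2 * τ i.castSucc) ω)
        = fun i => (fun x => -(c/2) * x)
            ∘ (fun ω => W ((fun j => 4/c^2 * τ j) i.succ) ω
                - W ((fun j => 4/c^2 * τ j) i.castSucc) ω) := by
      funext i ω; simp [Function.comp]; ring
    rw [heq]
    exact (hW.indep_incr n (fun j => 4/c^2 * τ j)
      (fun i => by have := hτ0 i; positivity)
      (fun a b hab => by have := hτm hab; nlinarith)).comp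
      (fun _ x => -(c/2) * x) (fun _ => measurable_const_mul _)

lemma riemann_tendsto {g : ℝ → ℝ} (hg : Continuous g) {T : ℝ} (hT : 0 ≤ T) :
    Tendsto (fun n : ℕ => ∑ k ∈ Finset.range (n+1), (T/(n+1)) * g (T*k/(n+1)))
      atTop (𝓝 (∫ s in (0:ℝ)..T, g s)) := by
  rcases eq_or_lt_of_le hT with h0 | hT
  · simp only [← h0]
    simp
  rw [Metric.tendsto_atTop]
  intro E hE
  -- uniform continuity on [0,T]
  have hUC : UniformContinuousOn g (Icc 0 T) :=
    (isCompact_Icc).uniformContinuousOn_of_continuous hg.continuousOn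
  rw [Metric.uniformContinuousOn_iff] at hUC
  obtain ⟨δ, hδ, hδ'⟩ := hUC (E / (2*T)) (by positivity)
  obtain ⟨N, hN⟩ := exists_nat_gt (T / δ)
  refine ⟨N, fun n hn => ?_⟩
  set M : ℝ := (n:ℝ) + 1 with hM
  have hM0 : (0:ℝ) < M := by positivity
  have hmesh : T / M < δ := by
    have h1 : T / δ < M := by
      have : (N:ℝ) ≤ (n:ℝ) := Nat.cast_le.mpr hn
      rw [hM]; linarith
    rw [div_lt_iff₀ hM0]
    rw [div_lt_iff₀ hδ] at h1
    linarith [h1]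
  -- partition points
  set a : ℕ → ℝ := fun k => T * k / M with ha
  have ha_mem : ∀ k ≤ n+1, a k ∈ Icc 0 T := by
    intro k hk
    constructor
    · have : (0:ℝ) ≤ (k:ℝ) := Nat.cast_nonneg k
      positivity
    · rw [div_le_iff₀ hM0]
      have : (k:ℝ) ≤ M := by
        rw [hM]; exact_mod_cast Nat.cast_le.mpr hk
      nlinarith
  have hstep : ∀ k : ℕ, a (k+1) - a k = T / M := by
    intro k; simp only [ha]; push_cast; ring
  have hint : ∀ k < n+1, IntervalIntegrable g volume (a k) (a (k+1)) :=
    fun k _ => hg.intervalIntegrable _ _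
  have hsum : ∑ k ∈ Finset.range (n+1), ∫ x in a k..a (k+1), g x = ∫ s in (0:ℝ)..T, g s := by
    rw [intervalIntegral.sum_integral_adjacent_intervals hint]
    congr 1
    · simp [ha]
    · simp only [ha]; field_simp; simp [hM]
  rw [dist_eq_norm, ← hsum, ← Finset.sum_sub_distrib]
  have hterm : ∀ k ∈ Finset.range (n+1),
      ‖(T/M) * g (a k) - ∫ x in a k..a (k+1), g x‖ ≤ (E/(2*T)) * (T/M) := by
    intro k hk
    rw [Finset.mem_range] at hk
    have hconst : (T/M) * g (a k) = ∫ _ in a k..a (k+1), g (a k) := by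
      rw [intervalIntegral.integral_const, hstep k, smul_eq_mul]
    rw [hconst, ← intervalIntegral.integral_sub (intervalIntegrable_const) (hint k hk)]
    have hle : a k ≤ a (k+1) := by
      have := hstep k
      have : a (k+1) = a k + T/M := by linarith [hstep k]
      rw [this]
      have : (0:ℝ) ≤ T/M := by positivity
      linarith
    have hbnd : ∀ x ∈ Set.uIoc (a k) (a (k+1)), ‖g (a k) - g x‖ ≤ E/(2*T) := by
      intro x hx
      rw [Set.uIoc_of_le hle] at hx
      have hxm : x ∈ Icc 0 T := by
        have h1 := (ha_mem k (le_of_lt hk)).1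
        have h2 := (ha_mem (k+1) hk).2
        exact ⟨le_trans h1 (le_of_lt hx.1), le_trans hx.2 h2⟩
      have hdist : dist (a k) x < δ := by
        rw [Real.dist_eq, abs_sub_comm, abs_of_nonneg (by linarith [hx.1])]
        have : x - a k ≤ T/M := by linarith [hx.2, hstep k]
        linarith
      have := hδ' (a k) (ha_mem k (le_of_lt hk)) x hxm hdist
      rw [Real.dist_eq] at this
      exact le_of_lt this
    calc ‖∫ x in a k..a (k+1), (g (a k) - g x)‖
        ≤ (E/(2*T)) * |a (k+1) - a k| :=
          intervalIntegral.norm_integral_le_of_norm_le_const hbnd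
      _ = (E/(2*T)) * (T/M) := by rw [hstep k, abs_of_nonneg (by positivity)]
  calc ‖∑ k ∈ Finset.range (n+1), ((T/M) * g (a k) - ∫ x in a k..a (k+1), g x)‖
      ≤ ∑ k ∈ Finset.range (n+1), ‖(T/M) * g (a k) - ∫ x in a k..a (k+1), g x‖ :=
        norm_sum_le _ _
    _ ≤ ∑ _k ∈ Finset.range (n+1), (E/(2*T)) * (T/M) := Finset.sum_le_sum hterm
    _ = (n+1) * ((E/(2*T)) * (T/M)) := by rw [Finset.sum_const, Finset.card_range]; push_cast; ring
    _ = E/2 := by field_simp [hM]; ring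
    _ < E := by linarith

lemma law_integral_exp_eq {Ω : Type*} [MeasurableSpace Ω] {P : Measure Ω} {X Y : ℝ → Ω → ℝ}
    (hX : IsStandardBrownianMotion P X) (hY : IsStandardBrownianMotion P Y)
    (T : ℝ) (hT : 0 ≤ T) :
    P.map (fun ω => ∫ s in (0:ℝ)..T, Real.exp (2 * X s ω))
      = P.map (fun ω => ∫ s in (0:ℝ)..T, Real.exp (2 * Y s ω)) := by
  haveI := hX.isProbability
  set τ : (n : ℕ) → Fin (n+1) → ℝ := fun n k => T * ((k : ℕ) : ℝ) / ((n:ℝ)+1) with hτ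
  have hτ0 : ∀ n k, 0 ≤ τ n k := by
    intro n k
    have : (0:ℝ) ≤ ((k:ℕ):ℝ) := Nat.cast_nonneg _
    positivity
  have hτm : ∀ n, Monotone (τ n) := by
    intro n a b hab
    have h1 : ((a:ℕ):ℝ) ≤ ((b:ℕ):ℝ) := by exact_mod_cast hab
    have h2 : (0:ℝ) < (n:ℝ)+1 := by positivity
    simp only [hτ]
    gcongr
  set gn : (n : ℕ) → (Fin (n+1) → ℝ) → ℝ :=
    fun n y => ∑ k : Fin (n+1), (T/((n:ℝ)+1)) * Real.exp (2 * y k) with hgn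
  have hgn_meas : ∀ n, Measurable (gn n) := by
    intro n
    refine Finset.measurable_sum _ fun k _ => ?_
    exact (measurable_const.mul ((Real.measurable_exp.comp
      (measurable_const.mul (measurable_pi_apply k)))))
  have hgn_cont : ∀ n, Continuous (gn n) := by
    intro n
    refine continuous_finset_sum _ fun k _ => ?_
    exact continuous_const.mul (Real.continuous_exp.comp
      (continuous_const.mul (continuous_apply k)))
  have main : ∀ (Z : ℝ → Ω → ℝ), IsStandardBrownianMotion P Z →
      Measurable (fun ω => ∫ s in (0:ℝ)..T, Real.exp (2 * Z s ω)) ∧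
      ∀ f : ℝ →ᵇ ℝ≥0, Tendsto (fun n => ∫⁻ y, (f (gn n y) : ℝ≥0∞)
          ∂((Measure.pi fun i : Fin (n+1) =>
            gaussianReal 0 (((Fin.cons 0 (τ n) : Fin (n+2) → ℝ) i.succ
              - (Fin.cons 0 (τ n) : Fin (n+2) → ℝ) i.castSucc).toNNReal)).map
            (cumsum (n+1)))) atTop
        (𝓝 (∫⁻ ω, (f (∫ s in (0:ℝ)..T, Real.exp (2 * Z s ω)) : ℝ≥0∞) ∂P)) := by
    intro Z hZ
    set J : Ω → ℝ := fun ω => ∫ s in (0:ℝ)..T, Real.exp (2 * Z s ω) with hJ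
    set R : ℕ → Ω → ℝ := fun n ω => gn n (fun k => Z (τ n k) ω) with hR
    have htuple_meas : ∀ n, Measurable (fun ω (k : Fin (n+1)) => Z (τ n k) ω) :=
      fun n => measurable_pi_lambda _ fun k => hZ.measurable _
    have hRmeas : ∀ n, Measurable (R n) := fun n => (hgn_meas n).comp (htuple_meas n)
    have htend : ∀ ω, Tendsto (fun n => R n ω) atTop (𝓝 (J ω)) := by
      intro ω
      have hc : Continuous (fun s => Real.exp (2 * Z s ω)) :=
        Real.continuous_exp.comp (continuous_const.mul (hZ.cont ω))
      have := riemann_tendsto hc hT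
      convert this using 2 with n
      rw [hR, hgn]
      rw [Finset.sum_range (fun k : ℕ => (T/((n:ℝ)+1)) * Real.exp (2 * Z (T*(k:ℝ)/((n:ℝ)+1)) ω))]
    have hJmeas : Measurable J :=
      measurable_of_tendsto_metrizable hRmeas (tendsto_pi_nhds.mpr htend)
    refine ⟨hJmeas, fun f => ?_⟩
    obtain ⟨C, hC⟩ := f.bounded
    set bound : ℝ≥0∞ := (f 0 : ℝ≥0∞) + ENNReal.ofReal C with hbd
    have hfb : ∀ x : ℝ, (f x : ℝ≥0∞) ≤ bound := by
      intro x
      have h1 : dist (f x) (f 0) ≤ C := hC x 0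
      rw [NNReal.dist_eq] at h1
      have h2 : ((f x : ℝ≥0) : ℝ) ≤ ((f 0 : ℝ≥0) : ℝ) + C := by
        have h4 : ((f x:ℝ≥0):ℝ) - ((f 0:ℝ≥0):ℝ) ≤ |((f x:ℝ≥0):ℝ) - ((f 0:ℝ≥0):ℝ)| :=
          le_abs_self _
        linarith
      calc (f x : ℝ≥0∞) = ENNReal.ofReal ((f x : ℝ≥0) : ℝ) := by
            rw [ENNReal.ofReal_coe_nnreal]
        _ ≤ ENNReal.ofReal (((f 0 : ℝ≥0) : ℝ) + C) := ENNReal.ofReal_le_ofReal h2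
        _ ≤ bound := by
            rw [hbd, ENNReal.ofReal_add (by positivity) (le_trans dist_nonneg (hC 0 0)),
              ENNReal.ofReal_coe_nnreal]
    have hc1 : Tendsto (fun n => ∫⁻ ω, (f (R n ω) : ℝ≥0∞) ∂P) atTop
        (𝓝 (∫⁻ ω, (f (J ω) : ℝ≥0∞) ∂P)) := by
      refine tendsto_lintegral_of_dominated_convergence (fun _ => bound)
        (fun n => measurable_coe_nnreal_ennreal.comp
          (f.continuous.measurable.comp (hRmeas n)))
        (fun n => Filter.Eventually.of_forall fun ω => hfb _)
        ?_ (Filter.Eventually.of_forall fun ω => ?_)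
      · rw [lintegral_const]
        exact ENNReal.mul_ne_top (by simp [hbd, ENNReal.ofReal_ne_top]) (by simp)
      · exact ENNReal.tendsto_coe.mpr ((f.continuous.tendsto _).comp (htend ω))
    have hc2 : ∀ n, ∫⁻ ω, (f (R n ω) : ℝ≥0∞) ∂P = ∫⁻ y, (f (gn n y) : ℝ≥0∞)
        ∂((Measure.pi fun i : Fin (n+1) =>
          gaussianReal 0 (((Fin.cons 0 (τ n) : Fin (n+2) → ℝ) i.succ
            - (Fin.cons 0 (τ n) : Fin (n+2) → ℝ) i.castSucc).toNNReal)).map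
          (cumsum (n+1))) := by
      intro n
      rw [← bm_fdd hZ (τ n) (hτ0 n) (hτm n),
        lintegral_map (show Measurable fun y : Fin (n+1) → ℝ => ((f (gn n y) : ℝ≥0) : ℝ≥0∞) from
          measurable_coe_nnreal_ennreal.comp
          (f.continuous.measurable.comp (hgn_meas n))) (htuple_meas n)]
    simpa only [hc2] using hc1
  obtain ⟨hmX, hlX⟩ := main X hX
  obtain ⟨hmY, hlY⟩ := main Y hY
  haveI : IsProbabilityMeasure (P.map (fun ω => ∫ s in (0:ℝ)..T, Real.exp (2 * X s ω))) :=
    Measure.isProbabilityMeasure_map hmX.aemeasurable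
  refine ext_of_forall_lintegral_eq_of_IsFiniteMeasure fun f => ?_
  rw [lintegral_map (show Measurable fun x : ℝ => ((f x : ℝ≥0) : ℝ≥0∞) from
      measurable_coe_nnreal_ennreal.comp f.continuous.measurable) hmX,
    lintegral_map (show Measurable fun x : ℝ => ((f x : ℝ≥0) : ℝ≥0∞) from
      measurable_coe_nnreal_ennreal.comp f.continuous.measurable) hmY]
  exact tendsto_nhds_unique (hlX f) (hlY f)

lemma measurable_integral_exp {Ω : Type*} [MeasurableSpace Ω] {Z : ℝ → Ω → ℝ}
    (hmeas : ∀ s, Measurable (Z s)) (hcont : ∀ ω, Continuous fun s => Z s ω)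
    (T : ℝ) (hT : 0 ≤ T) :
    Measurable fun ω => ∫ s in (0:ℝ)..T, Real.exp (2 * Z s ω) := by
  have hR : ∀ n : ℕ, Measurable fun ω =>
      ∑ k ∈ Finset.range (n+1), (T/((n:ℝ)+1)) * Real.exp (2 * Z (T*(k:ℝ)/((n:ℝ)+1)) ω) := by
    intro n
    refine Finset.measurable_sum _ fun k _ => ?_
    exact measurable_const.mul (Real.measurable_exp.comp (measurable_const.mul (hmeas _)))
  refine measurable_of_tendsto_metrizable hR (tendsto_pi_nhds.mpr fun ω => ?_)
  exact riemann_tendsto (Real.continuous_exp.comp (continuous_const.mul (hcont ω))) hT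

/-- The law of the wave-breaking time: with `t*` the hitting time of
level `1` by the increasing process `−(v/2)∫₀ᵗ exp(−c W_s) ds` (`v < 0`, `c ≠ 0`),
one has `P(t* ≥ t) = P(∫₀^{c²t/4} exp(2 W_s) ds ≤ −c²/(2v))`. -/
theorem law_of_wave_breaking_time
    {Ω : Type*} [MeasurableSpace Ω] (P : Measure Ω) (W : ℝ → Ω → ℝ)
    (hW : IsStandardBrownianMotion P W)
    (c : ℝ) (hc : c ≠ 0) (v : ℝ) (hv : v < 0)
    (tstar : Ω → ℝ≥0∞)
    (htstar : ∀ ω, tstar ω =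
      sInf (ENNReal.ofReal ''
        {t : ℝ | 0 ≤ t ∧
          1 ≤ -(v / 2) * ∫ s in (0:ℝ)..t, Real.exp (-(c * W s ω))}))
    (t : ℝ) (ht : 0 ≤ t) :
    P {ω | ENNReal.ofReal t ≤ tstar ω}
      = P {ω | (∫ s in (0:ℝ)..(c^2 * t / 4), Real.exp (2 * W s ω))
          ≤ -c^2 / (2 * v)} := by
  have hc2 : (0:ℝ) < c^2 := by positivity
  have h4 : (0:ℝ) < 4/c^2 := by positivity
  have h4ne : (4/c^2 : ℝ) ≠ 0 := ne_of_gt h4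
  set T : ℝ := c^2 * t / 4 with hT
  have hT0 : 0 ≤ T := by rw [hT]; positivity
  set B : ℝ → Ω → ℝ := fun u ω => -(c/2) * W (4/c^2*u) ω with hB
  have hBbm : IsStandardBrownianMotion P B := scaled_bm hW c hc
  set K : ℝ := -c^2 / (2*v) with hK
  -- pointwise event identification
  have hiff : ∀ ω, (ENNReal.ofReal t ≤ tstar ω)
      ↔ (∫ s in (0:ℝ)..T, Real.exp (2 * B s ω)) ≤ K := by
    intro ω
    set I : ℝ → ℝ := fun τ => ∫ s in (0:ℝ)..τ, Real.exp (-(c * W s ω)) with hI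
    set J : ℝ := ∫ s in (0:ℝ)..T, Real.exp (2 * B s ω) with hJ
    have hexp : Continuous fun s => Real.exp (-(c * W s ω)) :=
      Real.continuous_exp.comp (continuous_const.mul (hW.cont ω)).neg
    have hIcont : Continuous I :=
      intervalIntegral.continuous_primitive (fun a b => hexp.intervalIntegrable a b) 0
    have hI0 : I 0 = 0 := intervalIntegral.integral_same
    have hImono : ∀ x y : ℝ, x < y → I x < I y := by
      intro x y hxy
      have hadd : I x + ∫ s in x..y, Real.exp (-(c * W s ω)) = I y :=
        intervalIntegral.integral_add_adjacent_intervals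
          (hexp.intervalIntegrable 0 x) (hexp.intervalIntegrable x y)
      have hpos : 0 < ∫ s in x..y, Real.exp (-(c * W s ω)) :=
        intervalIntegral.intervalIntegral_pos_of_pos (hexp.intervalIntegrable x y)
          (fun s => Real.exp_pos _) hxy
      linarith
    -- substitution : I t = (4/c^2) * J
    have hsub : I t = (4/c^2) * J := by
      have h1 := intervalIntegral.integral_comp_mul_left (a := (0:ℝ)) (b := T)
        (c := 4/c^2) (fun s => Real.exp (-(c * W s ω))) h4ne
      beta_reduce at h1
      have hep : (4/c^2) * T = t := by rw [hT]; field_simp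
      have hJeq : J = ∫ u in (0:ℝ)..T, Real.exp (-(c * W (4/c^2*u) ω)) := by
        rw [hJ]
        apply intervalIntegral.integral_congr
        intro u _
        simp only [hB]
        congr 1
        ring
      rw [hJeq, h1, mul_zero, hep, smul_eq_mul]
      rw [hI]
      field_simp
    -- step A
    have stepA : (ENNReal.ofReal t ≤ tstar ω) ↔ -(v/2) * I t ≤ 1 := by
      rw [htstar ω]
      constructor
      · intro h
        by_contra hgt
        push_neg at hgt
        have ht0 : 0 < t := by
          rcases eq_or_lt_of_le ht with h0 | h0
          · exfalso
            rw [← h0] at hgt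
            rw [show -(v/2) * I 0 = 0 by rw [hI0]; ring] at hgt
            linarith
          · exact h0
        have hFcont : Continuous fun τ => -(v/2) * I τ := continuous_const.mul hIcont
        have hmem : (1:ℝ) ∈ Icc (-(v/2) * I 0) (-(v/2) * I t) := by
          constructor
          · rw [hI0]; norm_num
          · linarith
        obtain ⟨τ, hτmem, hτeq⟩ :=
          intermediate_value_Icc (le_of_lt ht0) hFcont.continuousOn hmem
        have hτt : τ < t := by
          rcases lt_or_eq_of_le hτmem.2 with h' | h'
          · exact h'
          · exfalso; rw [h'] at hτeq; linarith
        have hle : sInf (ENNReal.ofReal ''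
            {τ' : ℝ | 0 ≤ τ' ∧ 1 ≤ -(v / 2) * ∫ s in (0:ℝ)..τ', Real.exp (-(c * W s ω))})
            ≤ ENNReal.ofReal τ :=
          sInf_le ⟨τ, ⟨hτmem.1, le_of_eq hτeq.symm⟩, rfl⟩
        have hlt : ENNReal.ofReal τ < ENNReal.ofReal t :=
          (ENNReal.ofReal_lt_ofReal_iff ht0).mpr hτt
        exact absurd (le_trans h hle) (not_le.mpr hlt)
      · intro h
        refine le_sInf ?_
        rintro b ⟨τ, ⟨hτ0, hτ1⟩, rfl⟩
        refine ENNReal.ofReal_le_ofReal ?_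
        by_contra hlt
        push_neg at hlt
        have h2 := hImono τ t hlt
        have hv2 : (0:ℝ) < -(v/2) := by linarith
        have h3 : -(v/2) * I τ < -(v/2) * I t := mul_lt_mul_of_pos_left h2 hv2
        have hτ1' : 1 ≤ -(v/2) * I τ := hτ1
        linarith
    -- step B
    have hA : (0:ℝ) < -2*v/c^2 := by
      apply div_pos _ hc2
      linarith
    have hIt : -(v/2) * I t = (-2*v/c^2) * J := by rw [hsub]; field_simp; ring
    have hKA : K = 1/(-2*v/c^2) := by
      rw [hK]
      field_simp
    have stepB : (-(v/2) * I t ≤ 1) ↔ J ≤ K := by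
      rw [hIt, hKA, le_div_iff₀ hA, mul_comm]
    exact stepA.trans stepB
  -- conclude
  have hsetfin : {ω | ENNReal.ofReal t ≤ tstar ω}
      = {ω | (∫ s in (0:ℝ)..T, Real.exp (2 * B s ω)) ≤ K} := Set.ext fun ω => hiff ω
  rw [hsetfin]
  have hmB : Measurable fun ω => ∫ s in (0:ℝ)..T, Real.exp (2 * B s ω) :=
    measurable_integral_exp hBbm.measurable hBbm.cont T hT0
  have hmW : Measurable fun ω => ∫ s in (0:ℝ)..T, Real.exp (2 * W s ω) :=
    measurable_integral_exp hW.measurable hW.cont T hT0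
  have h1 : P {ω | (∫ s in (0:ℝ)..T, Real.exp (2 * B s ω)) ≤ K}
      = (P.map fun ω => ∫ s in (0:ℝ)..T, Real.exp (2 * B s ω)) (Set.Iic K) := by
    rw [Measure.map_apply hmB measurableSet_Iic]; rfl
  have h2 : P {ω | (∫ s in (0:ℝ)..T, Real.exp (2 * W s ω)) ≤ K}
      = (P.map fun ω => ∫ s in (0:ℝ)..T, Real.exp (2 * W s ω)) (Set.Iic K) := by
    rw [Measure.map_apply hmW measurableSet_Iic]; rfl
  rw [h1, law_integral_exp_eq hBbm hW T hT0, ← h2]
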